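/- For s > 0 and points z_k = e^{2πik/n} the nth roots of unity, min over t ∈ [0, 2π) of Σ_{k=1}^n |e^{it} - z_k|^{-s} equals Σ_{k=1}^n |e^{iπ/n} - e^{2πik/n}|^{-s}; i.e., the Riesz s-potential of n equally spaced points on the unit circle is minimized at the midpoints between consecutive points. -/

import Mathlib

open Complex Real Set ENNReal

namespace RieszAux

/-- Geometric mean is at most arithmetic mean. -/
lemma gm_am {x y : ℝ} (hx : 0 ≤ x) (hy : 0 ≤ y) : Real.sqrt (x * y) ≤ (x + y) / 2 := by
  rw [show (x + y) / 2 = Real.sqrt (((x + y) / 2) ^ 2) from (Real.sqrt_sq (by positivity)).symm]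
  apply Real.sqrt_le_sqrt
  nlinarith [sq_nonneg (x - y)]

/-- Midpoint convexity in `ℝ≥0∞` of `x ↦ (ofReal x) ^ (-s)`. -/
lemma ofReal_rpow_neg_midpoint (s : ℝ) (hs : 0 < s) {a b c : ℝ} (ha : 0 ≤ a) (hb : 0 ≤ b)
    (h : (a + b) / 2 ≤ c) :
    ENNReal.ofReal c ^ (-s) ≤ (ENNReal.ofReal a ^ (-s) + ENNReal.ofReal b ^ (-s)) / 2 := by
  have hns : -s < 0 := by linarith
  rcases eq_or_lt_of_le ha with ha0 | ha
  · rw [← ha0, ENNReal.ofReal_zero, ENNReal.zero_rpow_of_neg hns]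
    rw [top_add, ENNReal.top_div_of_ne_top (by norm_num)]
    exact le_top
  rcases eq_or_lt_of_le hb with hb0 | hb
  · rw [← hb0, ENNReal.ofReal_zero, ENNReal.zero_rpow_of_neg hns]
    rw [add_top, ENNReal.top_div_of_ne_top (by norm_num)]
    exact le_top
  have hc : 0 < c := lt_of_lt_of_le (by linarith) h
  have hab : (0:ℝ) < a * b := mul_pos ha hb
  have key : c ^ (-s) ≤ (a ^ (-s) + b ^ (-s)) / 2 := by
    calc c ^ (-s) ≤ ((a + b) / 2) ^ (-s) :=
          Real.rpow_le_rpow_of_nonpos (by linarith) h (le_of_lt hns)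
      _ ≤ (Real.sqrt (a * b)) ^ (-s) :=
          Real.rpow_le_rpow_of_nonpos (Real.sqrt_pos.mpr hab) (gm_am ha.le hb.le) (le_of_lt hns)
      _ = Real.sqrt (a ^ (-s) * b ^ (-s)) := by
          rw [← Real.mul_rpow ha.le hb.le, Real.sqrt_eq_rpow, Real.sqrt_eq_rpow,
            ← Real.rpow_mul hab.le, ← Real.rpow_mul hab.le]
          congr 1
          ring
      _ ≤ (a ^ (-s) + b ^ (-s)) / 2 :=
          gm_am (Real.rpow_nonneg ha.le _) (Real.rpow_nonneg hb.le _)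
  calc ENNReal.ofReal c ^ (-s) = ENNReal.ofReal (c ^ (-s)) :=
        ENNReal.ofReal_rpow_of_pos hc
    _ ≤ ENNReal.ofReal ((a ^ (-s) + b ^ (-s)) / 2) := ENNReal.ofReal_le_ofReal key
    _ = (ENNReal.ofReal a ^ (-s) + ENNReal.ofReal b ^ (-s)) / 2 := by
        rw [ENNReal.ofReal_div_of_pos (by norm_num), ENNReal.ofReal_add
          (Real.rpow_nonneg ha.le _) (Real.rpow_nonneg hb.le _),
          ENNReal.ofReal_rpow_of_pos ha, ENNReal.ofReal_rpow_of_pos hb]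
        norm_num

lemma abs_sin_add_nat_mul_pi (x : ℝ) (j : ℕ) : |Real.sin (x + j * π)| = |Real.sin x| := by
  induction j with
  | zero => simp
  | succ j ih =>
      have : x + (j + 1 : ℕ) * π = (x + j * π) + π := by push_cast; ring
      rw [this, Real.sin_add_pi, abs_neg, ih]

lemma abs_sin_neg (x : ℝ) : |Real.sin (-x)| = |Real.sin x| := by
  rw [Real.sin_neg, abs_neg]

/-- `|exp(x i) - exp(y i)| = 2 |sin((x-y)/2)|`. -/
lemma abs_exp_sub_exp (x y : ℝ) :
    ‖Complex.exp (x * Complex.I) - Complex.exp (y * Complex.I)‖ =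
      2 * |Real.sin ((x - y) / 2)| := by
  have h : Complex.exp (x * Complex.I) - Complex.exp (y * Complex.I) =
      Complex.exp (((x + y) / 2 : ℝ) * Complex.I) *
        (2 * (Real.sin ((x - y) / 2) : ℂ) * Complex.I) := by
    rw [show ((x:ℂ) * Complex.I) = ((x + y) / 2 : ℝ) * Complex.I + (((x - y) / 2 : ℝ) : ℂ) * Complex.I by
          push_cast; ring,
        show ((y:ℂ) * Complex.I) = ((x + y) / 2 : ℝ) * Complex.I + ((-((x - y) / 2) : ℝ) : ℂ) * Complex.I by
          push_cast; ring,
        Complex.exp_add, Complex.exp_add, ← mul_sub]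
    congr 1
    rw [Complex.exp_mul_I, Complex.exp_mul_I]
    push_cast [Complex.cos_neg, Complex.sin_neg]
    ring
  rw [h, norm_mul, Complex.norm_exp_ofReal_mul_I, one_mul, norm_mul, norm_mul, Complex.norm_I,
    mul_one, Complex.norm_real, Real.norm_eq_abs, Complex.norm_two]

noncomputable def G (n : ℕ) (s t : ℝ) (k : ℕ) : ℝ≥0∞ :=
  ENNReal.ofReal ‖Complex.exp (t * Complex.I) -
    Complex.exp ((2 * Real.pi * k / n) * Complex.I)‖ ^ (-s)

noncomputable def F (n : ℕ) (s t : ℝ) : ℝ≥0∞ := ∑ k ∈ Finset.range n, G n s t k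

lemma G_eq (n : ℕ) (s t : ℝ) (k : ℕ) :
    G n s t k = ENNReal.ofReal (2 * |Real.sin ((t - 2 * π * k / n) / 2)|) ^ (-s) := by
  unfold G
  rw [show (2 * (Real.pi : ℂ) * (k : ℂ) / (n : ℂ)) * Complex.I
      = ((2 * Real.pi * k / n : ℝ) : ℂ) * Complex.I by push_cast; ring]
  rw [abs_exp_sub_exp]

lemma G_congr {n : ℕ} {s t t' : ℝ} {k k' : ℕ}
    (h : |Real.sin ((t - 2 * π * k / n) / 2)| = |Real.sin ((t' - 2 * π * k' / n) / 2)|) :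
    G n s t k = G n s t' k' := by
  rw [G_eq, G_eq, h]

lemma G_mod {n : ℕ} (hn : 1 ≤ n) (s t : ℝ) (k : ℕ) : G n s t k = G n s t (k % n) := by
  have hn0 : ((n : ℝ)) ≠ 0 := Nat.cast_ne_zero.mpr (by omega)
  have hk : ((k : ℝ)) = (n : ℝ) * ((k / n : ℕ) : ℝ) + ((k % n : ℕ) : ℝ) := by
    exact_mod_cast (Nat.div_add_mod k n).symm
  apply G_congr
  rw [show (t - 2 * π * (k % n : ℕ) / n) / 2 = (t - 2 * π * k / n) / 2 + ((k / n : ℕ) : ℝ) * π by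
    field_simp
    linear_combination (2 * π) * hk]
  rw [abs_sin_add_nat_mul_pi]

lemma sum_shift {n : ℕ} (hn : 1 ≤ n) (s t : ℝ) (j : ℕ) :
    ∑ k ∈ Finset.range n, G n s t ((k + j) % n) = ∑ k ∈ Finset.range n, G n s t k := by
  have hn0 : 0 < n := hn
  have hj : j ≤ n * j := Nat.le_mul_of_pos_left j hn0
  refine Finset.sum_nbij' (i := fun k => (k + j) % n) (j := fun k => (k + (n * j - j)) % n)
    ?_ ?_ ?_ ?_ ?_
  · intro a ha
    exact Finset.mem_range.mpr (Nat.mod_lt _ hn0)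
  · intro a ha
    exact Finset.mem_range.mpr (Nat.mod_lt _ hn0)
  · intro a ha
    have ha' : a < n := Finset.mem_range.mp ha
    show ((a + j) % n + (n * j - j)) % n = a
    rw [Nat.mod_add_mod, show a + j + (n * j - j) = a + n * j by omega,
      Nat.add_mul_mod_self_left, Nat.mod_eq_of_lt ha']
  · intro a ha
    have ha' : a < n := Finset.mem_range.mp ha
    show ((a + (n * j - j)) % n + j) % n = a
    rw [Nat.mod_add_mod, show a + (n * j - j) + j = a + n * j by omega,
      Nat.add_mul_mod_self_left, Nat.mod_eq_of_lt ha']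
  · intro a ha
    rfl

lemma F_shift {n : ℕ} (hn : 1 ≤ n) (s u : ℝ) (j : ℕ) :
    F n s (u + 2 * π * j / n) = F n s u := by
  have hn0 : ((n : ℝ)) ≠ 0 := Nat.cast_ne_zero.mpr (by omega)
  have hj : j ≤ n * j := Nat.le_mul_of_pos_left j hn
  unfold F
  rw [show (∑ k ∈ Finset.range n, G n s (u + 2 * π * j / n) k)
      = ∑ k ∈ Finset.range n, G n s u ((k + (n * j - j)) % n) from ?_]
  · exact sum_shift hn s u (n * j - j)
  · refine Finset.sum_congr rfl fun k _ => ?_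
    rw [← G_mod hn]
    apply G_congr
    have hc : ((k + (n * j - j) : ℕ) : ℝ) = (k : ℝ) + (n : ℝ) * j - j := by
      push_cast [Nat.cast_sub hj]
      ring
    rw [show (u + 2 * π * j / n - 2 * π * k / n) / 2
        = (u - 2 * π * ((k + (n * j - j) : ℕ) : ℝ) / n) / 2 + j * π by
      rw [hc]; field_simp; ring]
    rw [abs_sin_add_nat_mul_pi]

lemma F_reflect {n : ℕ} (hn : 1 ≤ n) (s u : ℝ) :
    F n s (2 * π / n - u) = F n s u := by
  have hn0 : ((n : ℝ)) ≠ 0 := Nat.cast_ne_zero.mpr (by omega)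
  unfold F
  have step1 : (∑ k ∈ Finset.range n, G n s (2 * π / n - u) k)
      = ∑ k ∈ Finset.range n, G n s u (n + 1 - k) := by
    refine Finset.sum_congr rfl fun k hk => ?_
    have hk' : k < n := Finset.mem_range.mp hk
    apply G_congr
    have hc : ((n + 1 - k : ℕ) : ℝ) = (n : ℝ) + 1 - k := by
      push_cast [Nat.cast_sub (by omega : k ≤ n + 1)]
      ring
    rw [show (2 * π / n - u - 2 * π * k / n) / 2
        = -((u - 2 * π * ((n + 1 - k : ℕ) : ℝ) / n) / 2 + 1 * π) by
      rw [hc]; field_simp; ring]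
    rw [abs_sin_neg, show (1 : ℝ) * π = (1 : ℕ) * π by norm_num, abs_sin_add_nat_mul_pi]
  have step2 : (∑ k ∈ Finset.range n, G n s u (n + 1 - k))
      = ∑ k ∈ Finset.range n, G n s u (k + 2) := by
    rw [← Finset.sum_range_reflect (fun k => G n s u (k + 2)) n]
    refine Finset.sum_congr rfl fun k hk => ?_
    have hk' : k < n := Finset.mem_range.mp hk
    congr 1
    omega
  have step3 : (∑ k ∈ Finset.range n, G n s u (k + 2))
      = ∑ k ∈ Finset.range n, G n s u k := by
    rw [show (∑ k ∈ Finset.range n, G n s u (k + 2))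
        = ∑ k ∈ Finset.range n, G n s u ((k + 2) % n) from
      Finset.sum_congr rfl fun k _ => G_mod hn s u (k + 2)]
    exact sum_shift hn s u 2
  rw [step1, step2, step3]

lemma sin_term_midpoint (s : ℝ) (hs : 0 < s) {x y : ℝ} (hx0 : 0 ≤ x) (hxπ : x ≤ π)
    (hy0 : 0 ≤ y) (hyπ : y ≤ π) :
    ENNReal.ofReal (2 * |Real.sin ((x + y) / 2)|) ^ (-s) ≤
      (ENNReal.ofReal (2 * |Real.sin x|) ^ (-s) + ENNReal.ofReal (2 * |Real.sin y|) ^ (-s)) / 2 := by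
  have hm0 : 0 ≤ (x + y) / 2 := by linarith
  have hmπ : (x + y) / 2 ≤ π := by linarith
  have hsm : 0 ≤ Real.sin ((x + y) / 2) := Real.sin_nonneg_of_nonneg_of_le_pi hm0 hmπ
  have hsx : 0 ≤ Real.sin x := Real.sin_nonneg_of_nonneg_of_le_pi hx0 hxπ
  have hsy : 0 ≤ Real.sin y := Real.sin_nonneg_of_nonneg_of_le_pi hy0 hyπ
  rw [_root_.abs_of_nonneg hsm, _root_.abs_of_nonneg hsx, _root_.abs_of_nonneg hsy]
  apply ofReal_rpow_neg_midpoint s hs (by linarith) (by linarith)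
  have hsum : Real.sin x + Real.sin y = 2 * Real.sin ((x + y) / 2) * Real.cos ((x - y) / 2) := by
    have h := Real.sin_sub_sin x (-y)
    rw [Real.sin_neg] at h
    rw [show x + y = x - -y from by ring, show (x - y) = (x + -y) from by ring]
    linarith
  nlinarith [Real.cos_le_one ((x - y) / 2)]

lemma term_midpoint {n : ℕ} (hn : 1 ≤ n) (s : ℝ) (hs : 0 < s) {u : ℝ} (hu0 : 0 ≤ u)
    (hu1 : u ≤ 2 * π / n) {k : ℕ} (hk : k < n) :
    G n s (π / n) k ≤ (G n s u k + G n s (2 * π / n - u) k) / 2 := by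
  have hn0 : (0 : ℝ) < (n : ℝ) := by exact_mod_cast hn
  have hπ : (0 : ℝ) < π := Real.pi_pos
  have hπn : π / n ≤ π := div_le_self hπ.le (by exact_mod_cast hn)
  have hu2 : u / 2 ≤ π / n := by
    rw [div_le_div_iff₀ (by norm_num) hn0]
    rw [le_div_iff₀ hn0] at hu1
    linarith
  rcases Nat.eq_zero_or_pos k with hk0 | hk1
  · subst hk0
    rw [G_eq, G_eq, G_eq]
    have e1 : (π / n - 2 * π * (0 : ℕ) / n) / 2 = (u / 2 + (π / n - u / 2)) / 2 := by
      push_cast; ring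
    have e2 : (u - 2 * π * (0 : ℕ) / n) / 2 = u / 2 := by push_cast; ring
    have e3 : (2 * π / n - u - 2 * π * (0 : ℕ) / n) / 2 = π / n - u / 2 := by
      push_cast; field_simp; ring
    rw [e1, e2, e3]
    exact sin_term_midpoint s hs (by linarith) (by linarith) (by linarith) (by linarith)
  · have hkn : ((k : ℝ)) ≤ (n : ℝ) := by exact_mod_cast hk.le
    have hk1' : (1 : ℝ) ≤ (k : ℝ) := by exact_mod_cast hk1
    have hπkn : π * k / n ≤ π := by
      rw [div_le_iff₀ hn0]
      nlinarith
    have hπ1k : π / n ≤ π * k / n := by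
      rw [div_le_div_iff₀ hn0 hn0]
      have := mul_le_mul_of_nonneg_right hk1' (mul_pos hπ hn0).le
      nlinarith
    rw [G_eq, G_eq, G_eq]
    have e1 : (π / (n : ℝ) - 2 * π * k / n) / 2
        = -(((π * k / n - u / 2) + (π * k / n - π / n + u / 2)) / 2) := by ring
    have e2 : (u - 2 * π * (k : ℝ) / n) / 2 = -(π * k / n - u / 2) := by ring
    have e3 : (2 * π / (n : ℝ) - u - 2 * π * k / n) / 2
        = -(π * k / n - π / n + u / 2) := by ring
    rw [e1, e2, e3, abs_sin_neg, abs_sin_neg, abs_sin_neg]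
    exact sin_term_midpoint s hs (by linarith) (by linarith) (by linarith) (by linarith)

end RieszAux

/-- The Riesz `s`-potential of the `n`-th roots of unity is minimized over the circle at
the midpoints between consecutive points. -/
theorem riesz_min_at_midpoint (n : ℕ) (hn : 1 ≤ n) (s : ℝ) (hs : 0 < s) :
    IsLeast ((fun t : ℝ => ∑ k ∈ Finset.range n,
        ENNReal.ofReal ‖Complex.exp (t * Complex.I) -
          Complex.exp ((2 * Real.pi * k / n) * Complex.I)‖ ^ (-s)) ''
      Set.Ico (0 : ℝ) (2 * Real.pi))
      (∑ k ∈ Finset.range n,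
        ENNReal.ofReal ‖Complex.exp ((Real.pi / n) * Complex.I) -
          Complex.exp ((2 * Real.pi * k / n) * Complex.I)‖ ^ (-s)) := by
  have hπ := Real.pi_pos
  have hn0 : (0:ℝ) < (n : ℝ) := by exact_mod_cast hn
  have key : ∀ u : ℝ, 0 ≤ u → u ≤ 2 * π / n →
      RieszAux.F n s (π / n) ≤ RieszAux.F n s u := by
    intro u hu0 hu1
    have step1 : RieszAux.F n s (π / n)
        ≤ (RieszAux.F n s u + RieszAux.F n s (2 * π / n - u)) / 2 := by
      unfold RieszAux.F
      refine le_trans (Finset.sum_le_sum fun k hk =>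
        RieszAux.term_midpoint hn s hs hu0 hu1 (Finset.mem_range.mp hk)) ?_
      simp_rw [div_eq_mul_inv]
      rw [← Finset.sum_mul, Finset.sum_add_distrib]
    calc RieszAux.F n s (π / n)
        ≤ (RieszAux.F n s u + RieszAux.F n s (2 * π / n - u)) / 2 := step1
      _ = (RieszAux.F n s u / 2 + RieszAux.F n s u / 2) := by
          rw [RieszAux.F_reflect hn, ENNReal.add_div]
      _ = RieszAux.F n s u := ENNReal.add_halves _
  have hc : (((π / (n:ℝ)) : ℝ) : ℂ) = (π : ℂ) / (n : ℂ) := by push_cast; ring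
  constructor
  · refine ⟨π / n, ⟨by positivity, ?_⟩, ?_⟩
    · calc π / (n:ℝ) ≤ π := div_le_self hπ.le (by exact_mod_cast hn)
        _ < 2 * π := by linarith
    · show RieszAux.F n s (π / n) = _
      unfold RieszAux.F RieszAux.G
      rw [hc]
  · rintro v ⟨t, ⟨ht0, ht2⟩, rfl⟩
    rw [show (∑ k ∈ Finset.range n,
        ENNReal.ofReal ‖Complex.exp ((π:ℂ) / (n:ℂ) * Complex.I) -
          Complex.exp ((2 * (π:ℂ) * (k:ℂ) / (n:ℂ)) * Complex.I)‖ ^ (-s))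
        = RieszAux.F n s (π / n) from by unfold RieszAux.F RieszAux.G; rw [hc]]
    show RieszAux.F n s (π / n) ≤ RieszAux.F n s t
    have h2π : (0:ℝ) < 2 * π := by linarith
    have hjle : ((⌊t * n / (2 * π)⌋₊ : ℕ) : ℝ) ≤ t * n / (2 * π) :=
      Nat.floor_le (by positivity)
    have hjlt : t * n / (2 * π) < (⌊t * n / (2 * π)⌋₊ : ℕ) + 1 := Nat.lt_floor_add_one _
    have h1 : ((⌊t * n / (2 * π)⌋₊ : ℕ) : ℝ) * (2 * π) ≤ t * n := (le_div_iff₀ h2π).mp hjle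
    have h2 : t * n < (((⌊t * n / (2 * π)⌋₊ : ℕ) : ℝ) + 1) * (2 * π) :=
      (div_lt_iff₀ h2π).mp hjlt
    have hu0 : 0 ≤ t - 2 * π * (⌊t * n / (2 * π)⌋₊ : ℕ) / n := by
      rw [sub_nonneg, div_le_iff₀ hn0]
      linarith
    have hu1 : t - 2 * π * (⌊t * n / (2 * π)⌋₊ : ℕ) / n ≤ 2 * π / n := by
      rw [sub_le_iff_le_add,
        show 2 * π / (n:ℝ) + 2 * π * (⌊t * n / (2 * π)⌋₊ : ℕ) / n
          = (2 * π + 2 * π * (⌊t * n / (2 * π)⌋₊ : ℕ)) / n from by ring,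
        le_div_iff₀ hn0]
      linarith
    calc RieszAux.F n s (π / n)
        ≤ RieszAux.F n s (t - 2 * π * (⌊t * n / (2 * π)⌋₊ : ℕ) / n) := key _ hu0 hu1
      _ = RieszAux.F n s t := by
          rw [← RieszAux.F_shift hn s (t - 2 * π * (⌊t * n / (2 * π)⌋₊ : ℕ) / n)
            ⌊t * n / (2 * π)⌋₊]
          congr 1
          ring
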